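/- Let N ≥ 1 and σ ∈ C_N. Then σ avoids 132 if and only if either σ is the identity permutation, or there exists an integer y with ⌈N/2⌉ < y ≤ N such that: σ(i) = y−1+i for all 1 ≤ i ≤ N+1−y; σ(y−1+i) = i for all 1 ≤ i ≤ N+1−y; σ maps the interval {N+2−y, …, y−1} onto itself; and the permutation of S_{2y−2−N} order-isomorphic to σ(N+2−y), …, σ(y−1) is (empty or) a centrosymmetric permutation avoiding 132. -/
import Mathlib


/-- The value of the permutation `σ` of `{1,…,N}` (modeled on `Fin N`) at a
1-indexed position `i` (so `pval σ i ∈ {1,…,N}` for `1 ≤ i ≤ N`). -/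
def pval {N : ℕ} (σ : Equiv.Perm (Fin N)) (i : ℕ) : ℕ :=
  if h : i - 1 < N then ((σ ⟨i - 1, h⟩ : ℕ) + 1) else 0

/-- `σ` is centrosymmetric: `σ(i) + σ(N+1−i) = N+1` for all `1 ≤ i ≤ N`. -/
def IsCentro {N : ℕ} (σ : Equiv.Perm (Fin N)) : Prop :=
  ∀ i, 1 ≤ i → i ≤ N → pval σ i + pval σ (N + 1 - i) = N + 1

/-- `σ` avoids the pattern 132. -/
def Avoids132 {N : ℕ} (σ : Equiv.Perm (Fin N)) : Prop :=
  ¬ ∃ i j k, 1 ≤ i ∧ i < j ∧ j < k ∧ k ≤ N ∧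
    pval σ i < pval σ k ∧ pval σ k < pval σ j

/-- `σ` avoids the pattern 123. -/
def Avoids123 {N : ℕ} (σ : Equiv.Perm (Fin N)) : Prop :=
  ¬ ∃ i j k, 1 ≤ i ∧ i < j ∧ j < k ∧ k ≤ N ∧
    pval σ i < pval σ j ∧ pval σ j < pval σ k

/-- The number of descents of `σ`: positions `1 ≤ i ≤ N−1` with `σ(i) > σ(i+1)`. -/
noncomputable def des {N : ℕ} (σ : Equiv.Perm (Fin N)) : ℕ :=
  Nat.card {i : ℕ // 1 ≤ i ∧ i + 1 ≤ N ∧ pval σ (i + 1) < pval σ i}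

lemma pval_eq {N : ℕ} (σ : Equiv.Perm (Fin N)) (i : ℕ) (h : i - 1 < N) :
    pval σ i = (σ ⟨i - 1, h⟩ : ℕ) + 1 := dif_pos h

lemma pval_pos {N : ℕ} (σ : Equiv.Perm (Fin N)) (i : ℕ) (h1 : 1 ≤ i) (h2 : i ≤ N) :
    1 ≤ pval σ i := by
  rw [pval_eq σ i (by omega)]; omega

lemma pval_le {N : ℕ} (σ : Equiv.Perm (Fin N)) (i : ℕ) (h1 : 1 ≤ i) (h2 : i ≤ N) :
    pval σ i ≤ N := by
  have h : i - 1 < N := by omega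
  rw [pval_eq σ i h]
  have := (σ ⟨i-1, h⟩).isLt
  omega

lemma pval_inj {N : ℕ} (σ : Equiv.Perm (Fin N)) {i j : ℕ} (hi1 : 1 ≤ i) (hi2 : i ≤ N)
    (hj1 : 1 ≤ j) (hj2 : j ≤ N) (h : pval σ i = pval σ j) : i = j := by
  have h1 : i - 1 < N := by omega
  have h2 : j - 1 < N := by omega
  rw [pval_eq σ i h1, pval_eq σ j h2] at h
  have hval : σ ⟨i-1, h1⟩ = σ ⟨j-1, h2⟩ := Fin.ext (by omega)
  have := congrArg Fin.val (σ.injective hval)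
  simp at this
  omega

lemma pval_surj {N : ℕ} (σ : Equiv.Perm (Fin N)) (v : ℕ) (h1 : 1 ≤ v) (h2 : v ≤ N) :
    ∃ p, 1 ≤ p ∧ p ≤ N ∧ pval σ p = v := by
  have hv : v - 1 < N := by omega
  refine ⟨(σ.symm ⟨v-1, hv⟩ : ℕ) + 1, by omega, ?_, ?_⟩
  · have := (σ.symm ⟨v-1, hv⟩).isLt; omega
  · have h' : ((σ.symm ⟨v-1, hv⟩ : ℕ) + 1) - 1 < N := by
      simpa using (σ.symm ⟨v-1, hv⟩).isLt
    rw [pval_eq σ _ h']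
    have : (⟨(σ.symm ⟨v-1, hv⟩ : ℕ) + 1 - 1, h'⟩ : Fin N) = σ.symm ⟨v-1, hv⟩ := rfl
    rw [this, Equiv.apply_symm_apply]
    show v - 1 + 1 = v
    omega

lemma pval_chain {N : ℕ} (σ : Equiv.Perm (Fin N)) (a : ℕ) : ∀ b, a ≤ b →
    (∀ i, a ≤ i → i + 1 ≤ b → pval σ i < pval σ (i+1)) →
    pval σ a + (b - a) ≤ pval σ b := by
  intro b hab
  induction b, hab using Nat.le_induction with
  | base => intro _; simp
  | succ b hb ih =>
    intro hinc
    have h2 := ih (fun i h h' => hinc i h (by omega))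
    have h1 := hinc b hb (le_refl _)
    omega

lemma eq_one_of_pval_one {N : ℕ} (σ : Equiv.Perm (Fin N)) (hN : 1 ≤ N)
    (hav : Avoids132 σ) (h1 : pval σ 1 = 1) : σ = 1 := by
  have hinc : ∀ i, 1 ≤ i → i + 1 ≤ N → pval σ i < pval σ (i+1) := by
    intro i hi1 hi2
    by_contra hc
    push_neg at hc
    have hne : pval σ (i+1) ≠ pval σ i := fun h => by
      have := pval_inj σ (by omega) (by omega) (by omega) (by omega) h; omega
    rcases Nat.eq_or_lt_of_le hi1 with h1i | h1i
    · subst h1i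
      have := pval_pos σ (1+1) (by omega) (by omega)
      omega
    · apply hav
      have hp := pval_pos σ (i+1) (by omega) (by omega)
      have hne1 : pval σ (i+1) ≠ 1 := fun h => by
        have := pval_inj σ (i := i+1) (j := 1) (by omega) (by omega) (by omega) (by omega)
          (by rw [h, h1])
        omega
      exact ⟨1, i, i+1, le_refl _, by omega, by omega, by omega, by omega, by omega⟩
  have hub : ∀ i, 1 ≤ i → i ≤ N → pval σ i + (N - i) ≤ pval σ N := fun i hi1 hi2 =>
    pval_chain σ i N hi2 (fun t ht1 ht2 => hinc t (by omega) ht2)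
  have hlb : ∀ i, 1 ≤ i → i ≤ N → pval σ 1 + (i - 1) ≤ pval σ i := fun i hi1 hi2 =>
    pval_chain σ 1 i hi1 (fun t ht1 ht2 => hinc t ht1 (by omega))
  have hval : ∀ i, 1 ≤ i → i ≤ N → pval σ i = i := by
    intro i hi1 hi2
    have h3 := hub i hi1 hi2
    have h4 := hlb i hi1 hi2
    have h5 := pval_le σ N (by omega) (le_refl N)
    omega
  apply Equiv.ext
  intro x
  have hx := x.isLt
  have h' : (x:ℕ) + 1 - 1 < N := by omega
  have hv := hval ((x:ℕ)+1) (by omega) (by omega)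
  rw [pval_eq σ _ h'] at hv
  have hxx : (⟨(x:ℕ)+1-1, h'⟩ : Fin N) = x := rfl
  rw [hxx] at hv
  simp only [Equiv.Perm.one_apply]
  exact Fin.ext (by omega)

lemma forward {N : ℕ} (hN : 1 ≤ N) (σ : Equiv.Perm (Fin N)) (hσ : IsCentro σ)
    (hav : Avoids132 σ) (hone : σ ≠ 1) :
    ∃ y, (N + 1) / 2 < y ∧ y ≤ N ∧
        (∀ i, 1 ≤ i → i ≤ N + 1 - y → pval σ i = y - 1 + i) ∧
        (∀ i, 1 ≤ i → i ≤ N + 1 - y → pval σ (y - 1 + i) = i) ∧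
        ((Finset.Icc (N + 2 - y) (y - 1)).image (pval σ) = Finset.Icc (N + 2 - y) (y - 1)) ∧
        (∃ τ : Equiv.Perm (Fin (2 * y - 2 - N)),
          (∀ a b : Fin (2 * y - 2 - N),
            τ a < τ b ↔ pval σ (N + 2 - y + (a : ℕ)) < pval σ (N + 2 - y + (b : ℕ))) ∧
          IsCentro τ ∧ Avoids132 τ) := by
  -- N ≥ 2
  have hN2 : 2 ≤ N := by
    rcases Nat.lt_or_ge N 2 with h | h
    · exfalso; apply hone
      have hN1 : N = 1 := by omega
      subst hN1
      exact Equiv.ext fun x => Subsingleton.elim _ _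
    · exact h
  -- position of N
  obtain ⟨m, hm1, hm2, hmN⟩ := pval_surj σ N hN (le_refl N)
  -- 2m ≤ N
  have h2m : 2 * m ≤ N := by
    by_contra hc
    push_neg at hc
    have e0 := hσ m hm1 hm2
    rcases Nat.lt_or_ge (N+1-m) m with hlt | hge
    · rcases Nat.eq_or_lt_of_le hm2 with hmn | hmn
      · apply hone
        apply eq_one_of_pval_one σ hN hav
        have hNm1 : N + 1 - m = 1 := by omega
        rw [hNm1] at e0
        omega
      · apply hav
        have hb1 := pval_pos σ N hN (le_refl N)
        have hb2 := pval_le σ N hN (le_refl N)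
        have hne1 : pval σ N ≠ pval σ (N+1-m) := fun h => by
          have := pval_inj σ (i := N) (j := N+1-m) hN (le_refl N) (by omega) (by omega) h
          omega
        have hne2 : pval σ N ≠ pval σ m := fun h => by
          have := pval_inj σ (i := N) (j := m) hN (le_refl N) hm1 hm2 h
          omega
        exact ⟨N+1-m, m, N, by omega, hlt, hmn, le_refl N, by omega, by omega⟩
    · have hNm : N + 1 - m = m := by omega
      rw [hNm] at e0
      omega
  have hmN' : m < N := by omega
  -- prefix increasing
  have hinc : ∀ i, 1 ≤ i → i + 1 ≤ m → pval σ i < pval σ (i+1) := by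
    intro i hi1 hi2
    by_contra hc
    push_neg at hc
    have hne : pval σ (i+1) ≠ pval σ i := fun h => by
      have := pval_inj σ (i := i+1) (j := i) (by omega) (by omega) (by omega) (by omega) h
      omega
    rcases Nat.eq_or_lt_of_le hi2 with he | hlt2
    · have hpi := pval_le σ i (by omega) (by omega)
      have hpiN : pval σ i ≠ N := fun h => by
        have := pval_inj σ (i := i) (j := m) (by omega) (by omega) hm1 hm2 (h.trans hmN.symm)
        omega
      have hpe : pval σ (i+1) = N := by rw [he]; exact hmN
      omega
    · apply hav
      have e0 := hσ m hm1 hm2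
      have e1 := hσ (i+1) (by omega) (by omega)
      have e2 := hσ i (by omega) (by omega)
      have hpiN : pval σ i ≠ N := fun h => by
        have := pval_inj σ (i := i) (j := m) (by omega) (by omega) hm1 hm2 (h.trans hmN.symm)
        omega
      have hb1 := pval_le σ i (by omega) (by omega)
      have hb2 := pval_le σ (i+1) (by omega) (by omega)
      have hb3 := pval_pos σ (i+1) (by omega) (by omega)
      exact ⟨N+1-m, N+1-(i+1), N+1-i, by omega, by omega, by omega, by omega,
        by omega, by omega⟩
  -- key: value N-k at position m-k
  have key : ∀ k, k < m → pval σ (m - k) = N - k := by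
    intro k
    induction k using Nat.strong_induction_on with
    | _ k IH =>
      intro hk
      obtain ⟨p, hp1, hp2, hpv⟩ := pval_surj σ (N - k) (by omega) (by omega)
      have hpm : p = m - k := by
        by_contra hpc
        rcases Nat.lt_or_ge p (m - k) with hlt | hge
        · have hch := pval_chain σ p m (by omega) (fun t ht1 ht2 => hinc t (by omega) ht2)
          rw [hmN] at hch
          omega
        · rcases Nat.lt_or_ge m p with hgt | hle
          · rcases Nat.eq_zero_or_pos k with hk0 | hkpos
            · subst hk0
              have : pval σ p = pval σ m := by rw [hpv, hmN]; omega
              have := pval_inj σ (by omega) (by omega) hm1 hm2 this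
              omega
            · have hch1 := pval_chain σ 1 m hm1 (fun t ht1 ht2 => hinc t ht1 ht2)
              rw [hmN] at hch1
              have hne1 : pval σ 1 ≠ N - k := fun h => by
                have : pval σ 1 = pval σ p := by rw [h, hpv]
                have := pval_inj σ (i := 1) (j := p) (le_refl 1) (by omega) (by omega)
                  (by omega) this
                omega
              exact hav ⟨1, m, p, le_refl 1, by omega, hgt, hp2, by omega, by omega⟩
          · have hk' : m - p < k := by omega
            have := IH (m - p) hk' (by omega)
            rw [show m - (m - p) = p from by omega] at this
            omega
      rw [← hpm]
      exact hpv
  have F1 : ∀ i, 1 ≤ i → i ≤ m → pval σ i = N - m + i := by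
    intro i hi1 hi2
    have := key (m - i) (by omega)
    rw [show m - (m - i) = i from by omega] at this
    omega
  have F2 : ∀ i, 1 ≤ i → i ≤ m → pval σ (N - m + i) = i := by
    intro i hi1 hi2
    have e := hσ (m+1-i) (by omega) (by omega)
    rw [show N+1-(m+1-i) = N-m+i from by omega] at e
    have := F1 (m+1-i) (by omega) (by omega)
    omega
  have hmidU : ∀ p, m+1 ≤ p → p ≤ N - m → pval σ p ≤ N - m := by
    intro p hp1 hp2
    by_contra hc
    push_neg at hc
    have hle := pval_le σ p (by omega) (by omega)
    have hF := F1 (pval σ p - (N - m)) (by omega) (by omega)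
    have he : pval σ (pval σ p - (N-m)) = pval σ p := by omega
    have := pval_inj σ (i := pval σ p - (N-m)) (j := p) (by omega) (by omega) (by omega)
      (by omega) he
    omega
  have hmidL : ∀ p, m+1 ≤ p → p ≤ N - m → m+1 ≤ pval σ p := by
    intro p hp1 hp2
    by_contra hc
    push_neg at hc
    have hpos := pval_pos σ p (by omega) (by omega)
    have hF := F2 (pval σ p) (by omega) (by omega)
    have := pval_inj σ (i := N - m + pval σ p) (j := p) (by omega) (by omega) (by omega)
      (by omega) hF
    omega
  -- assemble
  refine ⟨N+1-m, by omega, by omega, ?_, ?_, ?_, ?_⟩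
  · intro i hi1 hi2
    have := F1 i hi1 (by omega)
    omega
  · intro i hi1 hi2
    rw [show N+1-m-1+i = N-m+i from by omega]
    exact F2 i hi1 (by omega)
  · rw [show N+2-(N+1-m) = m+1 from by omega, show N+1-m-1 = N-m from by omega]
    apply Finset.eq_of_subset_of_card_le
    · intro x hx
      simp only [Finset.mem_image, Finset.mem_Icc] at hx ⊢
      obtain ⟨p, ⟨hp1, hp2⟩, rfl⟩ := hx
      exact ⟨hmidL p hp1 hp2, hmidU p hp1 hp2⟩
    · rw [Finset.card_image_of_injOn]
      intro a ha b hb hab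
      simp only [Finset.coe_Icc, Set.mem_Icc] at ha hb
      exact pval_inj σ (by omega) (by omega) (by omega) (by omega) hab
  · have hf : ∀ a : Fin (2*(N+1-m)-2-N), pval σ (m+1+(a:ℕ)) - (m+1) < 2*(N+1-m)-2-N := by
      intro a
      have ha := a.isLt
      have h1 := hmidL (m+1+(a:ℕ)) (by omega) (by omega)
      have h2 := hmidU (m+1+(a:ℕ)) (by omega) (by omega)
      omega
    obtain ⟨g, hg⟩ : ∃ g : Fin (2*(N+1-m)-2-N) → Fin (2*(N+1-m)-2-N),
        ∀ a, (g a : ℕ) = pval σ (m+1+(a:ℕ)) - (m+1) :=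
      ⟨fun a => ⟨pval σ (m+1+(a:ℕ)) - (m+1), hf a⟩, fun a => rfl⟩
    have hginj : Function.Injective g := by
      intro a b hab
      have ha := a.isLt
      have hb := b.isLt
      have h1 := hmidL (m+1+(a:ℕ)) (by omega) (by omega)
      have h2 := hmidL (m+1+(b:ℕ)) (by omega) (by omega)
      have hv : (g a : ℕ) = (g b : ℕ) := by rw [hab]
      rw [hg a, hg b] at hv
      have heq : pval σ (m+1+(a:ℕ)) = pval σ (m+1+(b:ℕ)) := by omega
      have := pval_inj σ (i := m+1+(a:ℕ)) (j := m+1+(b:ℕ)) (by omega) (by omega) (by omega)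
        (by omega) heq
      exact Fin.ext (by omega)
    have hgbij := Finite.injective_iff_bijective.mp hginj
    have hτval : ∀ i, 1 ≤ i → i ≤ 2*(N+1-m)-2-N →
        pval (Equiv.ofBijective g hgbij) i + m = pval σ (m+i) := by
      intro i hi1 hi2
      have hlt : i - 1 < 2*(N+1-m)-2-N := by omega
      rw [pval_eq _ _ hlt]
      rw [Equiv.ofBijective_apply, hg ⟨i-1, hlt⟩]
      have hcoe : ((⟨i-1, hlt⟩ : Fin (2*(N+1-m)-2-N)) : ℕ) = i - 1 := rfl
      rw [hcoe, show m+1+(i-1) = m+i from by omega]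
      have h1 := hmidL (m+i) (by omega) (by omega)
      omega
    refine ⟨Equiv.ofBijective g hgbij, ?_, ?_, ?_⟩
    · intro a b
      have ha := a.isLt
      have hb := b.isLt
      have h1 := hmidL (m+1+(a:ℕ)) (by omega) (by omega)
      have h2 := hmidL (m+1+(b:ℕ)) (by omega) (by omega)
      rw [show N+2-(N+1-m)+(a:ℕ) = m+1+(a:ℕ) from by omega,
          show N+2-(N+1-m)+(b:ℕ) = m+1+(b:ℕ) from by omega]
      rw [Fin.lt_def, Equiv.ofBijective_apply, Equiv.ofBijective_apply, hg a, hg b]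
      omega
    · intro i hi1 hi2
      have e1 := hτval i hi1 hi2
      have e2 := hτval (2*(N+1-m)-2-N+1-i) (by omega) (by omega)
      have e3 := hσ (m+i) (by omega) (by omega)
      rw [show N+1-(m+i) = m+(2*(N+1-m)-2-N+1-i) from by omega] at e3
      omega
    · rintro ⟨i, j, k, hi', hij', hjk', hk', hv1', hv2'⟩
      have e1 := hτval i hi' (by omega)
      have e2 := hτval j (by omega) (by omega)
      have e3 := hτval k (by omega) hk'
      exact hav ⟨m+i, m+j, m+k, by omega, by omega, by omega, by omega, by omega, by omega⟩

lemma backward {N : ℕ} (hN : 1 ≤ N) (σ : Equiv.Perm (Fin N))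
    (y : ℕ) (hy1 : (N + 1) / 2 < y) (hy2 : y ≤ N)
    (hL : ∀ i, 1 ≤ i → i ≤ N + 1 - y → pval σ i = y - 1 + i)
    (hR : ∀ i, 1 ≤ i → i ≤ N + 1 - y → pval σ (y - 1 + i) = i)
    (hM : (Finset.Icc (N + 2 - y) (y - 1)).image (pval σ) = Finset.Icc (N + 2 - y) (y - 1))
    (τ : Equiv.Perm (Fin (2 * y - 2 - N)))
    (hiso : ∀ a b : Fin (2 * y - 2 - N),
      τ a < τ b ↔ pval σ (N + 2 - y + (a : ℕ)) < pval σ (N + 2 - y + (b : ℕ)))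
    (hτa : Avoids132 τ) : Avoids132 σ := by
  rintro ⟨i, j, k, hi, hij, hjk, hkN, hv1, hv2⟩
  have hy3 : N + 2 ≤ 2 * y := by omega
  have hreg : ∀ p, 1 ≤ p → p ≤ N →
      (p ≤ N+1-y ∧ pval σ p = y-1+p) ∨
      (N+2-y ≤ p ∧ p ≤ y-1 ∧ N+2-y ≤ pval σ p ∧ pval σ p ≤ y-1) ∨
      (y ≤ p ∧ pval σ p + y = p + 1) := by
    intro p hp1 hp2
    rcases Nat.lt_or_ge (N+1-y) p with hgt | hle
    · rcases Nat.lt_or_ge p y with hmid | hR'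
      · have hmem : pval σ p ∈ Finset.Icc (N+2-y) (y-1) := by
          rw [← hM]
          exact Finset.mem_image_of_mem _ (Finset.mem_Icc.mpr ⟨by omega, by omega⟩)
        rw [Finset.mem_Icc] at hmem
        exact Or.inr (Or.inl ⟨by omega, by omega, hmem.1, hmem.2⟩)
      · have := hR (p+1-y) (by omega) (by omega)
        rw [show y-1+(p+1-y) = p from by omega] at this
        exact Or.inr (Or.inr ⟨hR', by omega⟩)
    · exact Or.inl ⟨hle, hL p hp1 hle⟩
  rcases hreg i (by omega) (by omega) with (⟨hi1, hi2⟩ | ⟨hi1, hi2, hi3, hi4⟩ | ⟨hi1, hi2⟩) <;>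
    rcases hreg j (by omega) (by omega) with (⟨hj1, hj2⟩ | ⟨hj1, hj2, hj3, hj4⟩ | ⟨hj1, hj2⟩) <;>
      rcases hreg k (by omega) (by omega) with (⟨hk1, hk2⟩ | ⟨hk1, hk2, hk3, hk4⟩ | ⟨hk1, hk2⟩) <;>
        try omega
  -- remaining: all middle
  apply hτa
  have hbi : i - (N+2-y) < 2*y-2-N := by omega
  have hbj : j - (N+2-y) < 2*y-2-N := by omega
  have hbk : k - (N+2-y) < 2*y-2-N := by omega
  have hiso1 := hiso ⟨i-(N+2-y), hbi⟩ ⟨k-(N+2-y), hbk⟩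
  have hiso2 := hiso ⟨k-(N+2-y), hbk⟩ ⟨j-(N+2-y), hbj⟩
  have hc1 : ((⟨i-(N+2-y), hbi⟩ : Fin (2*y-2-N)) : ℕ) = i - (N+2-y) := rfl
  have hc2 : ((⟨j-(N+2-y), hbj⟩ : Fin (2*y-2-N)) : ℕ) = j - (N+2-y) := rfl
  have hc3 : ((⟨k-(N+2-y), hbk⟩ : Fin (2*y-2-N)) : ℕ) = k - (N+2-y) := rfl
  rw [hc1, hc3, show N+2-y+(i-(N+2-y)) = i from by omega,
      show N+2-y+(k-(N+2-y)) = k from by omega] at hiso1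
  rw [hc2, hc3, show N+2-y+(k-(N+2-y)) = k from by omega,
      show N+2-y+(j-(N+2-y)) = j from by omega] at hiso2
  have hpv : ∀ (x : ℕ) (h : x < 2*y-2-N), pval τ (x+1) = (τ ⟨x, h⟩ : ℕ) + 1 := by
    intro x h
    have h' : x + 1 - 1 < 2*y-2-N := by omega
    rw [pval_eq τ (x+1) h']
    rfl
  refine ⟨i-(N+2-y)+1, j-(N+2-y)+1, k-(N+2-y)+1, by omega, by omega, by omega, by omega, ?_, ?_⟩
  · rw [hpv _ hbi, hpv _ hbk]
    have := Fin.lt_def.mp (hiso1.mpr hv1)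
    omega
  · rw [hpv _ hbk, hpv _ hbj]
    have := Fin.lt_def.mp (hiso2.mpr hv2)
    omega


/-- a centrosymmetric `σ ∈ S_N` avoids 132 iff it is the identity or it
has the form `y y+1 … N β 1 2 … N+1−y` with `⌈N/2⌉ < y ≤ N`, where `β` occupies the
middle interval `{N+2−y,…,y−1}` and is order-isomorphic to a (possibly empty)
centrosymmetric 132-avoiding permutation of `S_{2y−2−N}`. -/
theorem stmt16 (N : ℕ) (hN : 1 ≤ N) (σ : Equiv.Perm (Fin N)) (hσ : IsCentro σ) :
    Avoids132 σ ↔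
      σ = 1 ∨
      ∃ y, (N + 1) / 2 < y ∧ y ≤ N ∧
        (∀ i, 1 ≤ i → i ≤ N + 1 - y → pval σ i = y - 1 + i) ∧
        (∀ i, 1 ≤ i → i ≤ N + 1 - y → pval σ (y - 1 + i) = i) ∧
        ((Finset.Icc (N + 2 - y) (y - 1)).image (pval σ) = Finset.Icc (N + 2 - y) (y - 1)) ∧
        (∃ τ : Equiv.Perm (Fin (2 * y - 2 - N)),
          (∀ a b : Fin (2 * y - 2 - N),
            τ a < τ b ↔ pval σ (N + 2 - y + (a : ℕ)) < pval σ (N + 2 - y + (b : ℕ))) ∧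
          IsCentro τ ∧ Avoids132 τ) := by
  constructor
  · intro hav
    by_cases hone : σ = 1
    · exact Or.inl hone
    · exact Or.inr (forward hN σ hσ hav hone)
  · rintro (hone | ⟨y, hy1, hy2, hL, hR, hM, τ, hiso, hτc, hτa⟩)
    · subst hone
      rintro ⟨i, j, k, hi, hij, hjk, hkN, hv1, hv2⟩
      have hid : ∀ p, 1 ≤ p → p ≤ N → pval (1 : Equiv.Perm (Fin N)) p = p := by
        intro p hp1 hp2
        rw [pval_eq _ p (by omega : p - 1 < N)]
        simp only [Equiv.Perm.one_apply]
        show p - 1 + 1 = p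
        omega
      have e1 := hid j (by omega) (by omega)
      have e2 := hid k (by omega) (by omega)
      omega
    · exact backward hN σ y hy1 hy2 hL hR hM τ hiso hτa
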